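/- Let u(x,t) = ∫₀ᵗ ∫_{|x−t+τ|}^{x+t−τ} F(ξ,τ) dξ dτ with F continuous on [0,L]×[0,T] and F(0,0)=0. Then u_x and u_t extend continuously across the diagonal x = t; that is, u ∈ C¹([0,L]×[0,T]). -/

import Mathlib

open Set intervalIntegral MeasureTheory Filter Function Asymptotics Topology

/-- FTC for a continuous function. -/
lemma duh_ftc {k : ℝ → ℝ} (hk : Continuous k) (w : ℝ) :
    HasDerivAt (fun y => ∫ ξ in (0:ℝ)..y, k ξ) (k w) w :=
  intervalIntegral.integral_hasDerivAt_right (hk.intervalIntegrable _ _)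
    (hk.stronglyMeasurableAtFilter _ _) hk.continuousAt

lemma duh_cont_param {k : ℝ → ℝ → ℝ} (hk : Continuous (uncurry k)) :
    Continuous fun p : ℝ × ℝ => ∫ x in (0:ℝ)..p.1, k p.2 x := by
  have : Continuous (uncurry fun (p : ℝ × ℝ) (x : ℝ) => k p.2 x) :=
    hk.comp ((continuous_fst.snd).prodMk continuous_snd)
  exact intervalIntegral.continuous_parametric_intervalIntegral_of_continuous this continuous_fst

/-- If `g` is continuous with continuous partial derivative `h` in the first variable, then
`(r, y) ↦ ∫ τ in 0..r, g y τ` is C¹. -/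
lemma duh_contDiff_primitive {g h : ℝ → ℝ → ℝ}
    (hg : Continuous (uncurry g)) (hh : Continuous (uncurry h))
    (hgh : ∀ y τ, HasDerivAt (fun z => g z τ) (h y τ) y) :
    ContDiff ℝ 1 (fun p : ℝ × ℝ => ∫ τ in (0:ℝ)..p.1, g p.2 τ) := by
  have hgc : ∀ y, Continuous fun τ => g y τ := fun y =>
    hg.comp (continuous_const.prodMk continuous_id)
  have hhc : ∀ y, Continuous fun τ => h y τ := fun y =>
    hh.comp (continuous_const.prodMk continuous_id)
  set f : ℝ × ℝ → ℝ := fun p => ∫ τ in (0:ℝ)..p.1, g p.2 τ with hf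
  set I : ℝ × ℝ → ℝ := fun p => ∫ τ in (0:ℝ)..p.1, h p.2 τ with hIdef
  have hIc : Continuous I := duh_cont_param (k := fun y τ => h y τ) hh
  set L : ℝ × ℝ → (ℝ × ℝ →L[ℝ] ℝ) := fun p =>
    g p.2 p.1 • ContinuousLinearMap.fst ℝ ℝ ℝ + I p • ContinuousLinearMap.snd ℝ ℝ ℝ with hLdef
  have hLc : Continuous L := by
    apply Continuous.add
    · exact (hg.comp (continuous_snd.prodMk continuous_fst)).smul continuous_const
    · exact hIc.smul continuous_const
  have key : ∀ p : ℝ × ℝ, HasFDerivAt f (L p) p := by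
    rintro ⟨r₀, y₀⟩
    -- part B : the fixed piece `∫ τ in 0..r₀, g y τ`
    have hφ : HasDerivAt (fun y => ∫ τ in (0:ℝ)..r₀, g y τ)
        (∫ τ in (0:ℝ)..r₀, h y₀ τ) y₀ := by
      obtain ⟨M, hM⟩ :=
        (isCompact_Icc.prod isCompact_uIcc :
          IsCompact ((Icc (y₀ - 1) (y₀ + 1)) ×ˢ uIcc (0:ℝ) r₀)).exists_bound_of_continuousOn
          hh.continuousOn
      refine (intervalIntegral.hasDerivAt_integral_of_dominated_loc_of_deriv_le
        (F := fun y τ => g y τ) (F' := fun y τ => h y τ) (bound := fun _ => M)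
        (Metric.ball_mem_nhds y₀ one_pos) ?_ ?_ ?_ ?_ ?_ ?_).2
      · exact Eventually.of_forall fun y => ((hgc y).aestronglyMeasurable).restrict
      · exact (hgc y₀).intervalIntegrable _ _
      · exact ((hhc y₀).aestronglyMeasurable).restrict
      · refine ae_of_all _ fun τ hτ y hy => ?_
        refine hM (y, τ) ⟨?_, uIoc_subset_uIcc hτ⟩
        have : |y - y₀| < 1 := by simpa [Real.dist_eq] using hy
        have h1 := abs_sub_lt_iff.1 this
        exact ⟨by linarith [h1.2], by linarith [h1.1]⟩
      · exact intervalIntegrable_const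
      · exact ae_of_all _ fun τ _ y _ => hgh y τ
    have hB : HasFDerivAt (fun q : ℝ × ℝ => ∫ τ in (0:ℝ)..r₀, g q.2 τ)
        ((∫ τ in (0:ℝ)..r₀, h y₀ τ) • ContinuousLinearMap.snd ℝ ℝ ℝ) (r₀, y₀) := by
      have h2 := hφ.hasFDerivAt.comp (r₀, y₀) (hasFDerivAt_snd (𝕜 := ℝ) (E := ℝ) (F := ℝ))
      refine h2.congr_fderiv ?_
      refine ContinuousLinearMap.ext fun v => ?_
      simp [mul_comm]
    have hA : HasFDerivAt (fun q : ℝ × ℝ => ∫ τ in r₀..q.1, g q.2 τ)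
        (g y₀ r₀ • ContinuousLinearMap.fst ℝ ℝ ℝ) (r₀, y₀) := by
      rw [hasFDerivAt_iff_isLittleO_nhds_zero, Asymptotics.isLittleO_iff]
      intro ε hε
      obtain ⟨δ, hδpos, hδ⟩ := Metric.continuousAt_iff.1 (hg.continuousAt (x := (y₀, r₀))) ε hε
      filter_upwards [Metric.ball_mem_nhds (0 : ℝ × ℝ) hδpos] with v hv
      have hvn : ‖v‖ < δ := by simpa using hv
      have hv1 : |v.1| < δ := lt_of_le_of_lt (by simpa using norm_fst_le v) hvn
      have hv2 : |v.2| < δ := lt_of_le_of_lt (by simpa using norm_snd_le v) hvn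
      have hsub : ∀ τ ∈ Set.uIoc r₀ (r₀ + v.1), ‖g (y₀ + v.2) τ - g y₀ r₀‖ ≤ ε := by
        intro τ hτ
        have hτd : |τ - r₀| ≤ |v.1| := by
          rcases le_total r₀ (r₀ + v.1) with hcmp | hcmp
          · rw [uIoc_of_le hcmp] at hτ
            rw [abs_of_pos (by linarith [hτ.1] : (0:ℝ) < τ - r₀),
              abs_of_nonneg (by linarith : (0:ℝ) ≤ v.1)]
            linarith [hτ.2]
          · rw [uIoc_of_ge hcmp] at hτ
            rw [abs_of_nonpos (by linarith [hτ.2] : τ - r₀ ≤ 0),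
              abs_of_nonpos (by linarith : v.1 ≤ 0)]
            linarith [hτ.1]
        have hd : dist (y₀ + v.2, τ) (y₀, r₀) < δ := by
          rw [Prod.dist_eq]
          apply max_lt
          · simpa [Real.dist_eq] using hv2
          · rw [Real.dist_eq]
            exact lt_of_le_of_lt hτd hv1
        have := hδ hd
        rw [Real.dist_eq] at this
        exact le_of_lt (by simpa [uncurry] using this)
      have hint1 : IntervalIntegrable (fun τ => g (y₀ + v.2) τ) volume r₀ (r₀ + v.1) :=
        (hgc (y₀ + v.2)).intervalIntegrable _ _
      have hrw : (∫ τ in r₀..((r₀, y₀) + v).1, g ((r₀, y₀) + v).2 τ)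
          - (∫ τ in r₀..(r₀:ℝ), g y₀ τ)
          - (g y₀ r₀ • ContinuousLinearMap.fst ℝ ℝ ℝ) v
          = ∫ τ in r₀..(r₀ + v.1), (g (y₀ + v.2) τ - g y₀ r₀) := by
        rw [intervalIntegral.integral_same,
          show ((r₀, y₀) + v).1 = r₀ + v.1 from rfl, show ((r₀, y₀) + v).2 = y₀ + v.2 from rfl,
          intervalIntegral.integral_sub hint1 intervalIntegrable_const,
          intervalIntegral.integral_const]
        simp [smul_eq_mul]
        ring
      rw [hrw]
      calc ‖∫ τ in r₀..(r₀ + v.1), (g (y₀ + v.2) τ - g y₀ r₀)‖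
          ≤ ε * |r₀ + v.1 - r₀| := intervalIntegral.norm_integral_le_of_norm_le_const hsub
        _ ≤ ε * ‖v‖ := by
            apply mul_le_mul_of_nonneg_left _ hε.le
            have h1 : |r₀ + v.1 - r₀| = |v.1| := by ring_nf
            rw [h1, ← Real.norm_eq_abs]
            exact norm_fst_le v
    have hsplit : f = fun q : ℝ × ℝ =>
        (∫ τ in r₀..q.1, g q.2 τ) + (∫ τ in (0:ℝ)..r₀, g q.2 τ) := by
      funext q
      rw [add_comm, intervalIntegral.integral_add_adjacent_intervals
        ((hgc q.2).intervalIntegrable _ _) ((hgc q.2).intervalIntegrable _ _)]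
    rw [hsplit, hLdef]
    exact hA.add hB
  rw [contDiff_one_iff_fderiv]
  refine ⟨fun p => (key p).differentiableAt, ?_⟩
  have hfd : fderiv ℝ f = L := funext fun p => (key p).fderiv
  rw [hfd]
  exact hLc


lemma duh_contDiff_primitive' {g h : ℝ → ℝ → ℝ}
    (hg : Continuous (uncurry g)) (hh : Continuous (uncurry h))
    (hgh : ∀ y τ, HasDerivAt (fun z => g z τ) (h y τ) y)
    {f : ℝ × ℝ → ℝ} (hfeq : ∀ p : ℝ × ℝ, f p = ∫ τ in (0:ℝ)..p.1, g p.2 τ) :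
    ContDiff ℝ 1 f := by
  have h1 := duh_contDiff_primitive hg hh hgh
  have h2 : f = fun p : ℝ × ℝ => ∫ τ in (0:ℝ)..p.1, g p.2 τ := funext hfeq
  rw [h2]
  exact h1

noncomputable section DuhamelDefs

variable (F : ℝ → ℝ → ℝ)

/-- trace on the left edge -/
def dc : ℝ → ℝ := fun τ => F 0 τ

/-- `F` minus its left-edge trace -/
def dF0 : ℝ → ℝ → ℝ := fun ξ τ => F ξ τ - F 0 τ

/-- odd extension of `dF0` in the first variable -/
def dFt0 : ℝ → ℝ → ℝ := fun ξ τ => if 0 ≤ ξ then dF0 F ξ τ else -dF0 F (-ξ) τ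

/-- primitive of the odd extension -/
def dG0 : ℝ → ℝ → ℝ := fun w τ => ∫ ξ in (0:ℝ)..w, dFt0 F ξ τ

def dTh : ℝ × ℝ → ℝ := fun p => ∫ τ in (0:ℝ)..p.1, dG0 F (p.2 - τ) τ

def dTh' : ℝ × ℝ → ℝ := fun p => ∫ τ in (0:ℝ)..p.1, dG0 F (p.2 + τ) τ

def dCc : ℝ → ℝ := fun s => ∫ σ in (0:ℝ)..s, dc F σ

def dCmax : ℝ → ℝ := fun s => dCc F (max s 0)

def dAbar : ℝ → ℝ := fun s => ∫ σ in (0:ℝ)..s, dCmax F σ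

def dC2 : ℝ → ℝ := fun s => ∫ σ in (0:ℝ)..s, σ * dc F σ

def dV : ℝ → ℝ := fun s => s * dCc F s - dC2 F s

def dPhi : ℝ × ℝ → ℝ := fun p =>
  dTh F (p.2, p.1 + p.2) - dTh' F (p.2, p.1 - p.2) + 2 * dV F p.2 - 2 * dAbar F (p.2 - p.1)

end DuhamelDefs

section DuhamelLemmas

variable {F : ℝ → ℝ → ℝ} (hF : Continuous (Function.uncurry F))

include hF

lemma dcc : Continuous (dc F) := hF.comp (continuous_const.prodMk continuous_id)

lemma dF0c : Continuous (uncurry (dF0 F)) := by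
  show Continuous fun q : ℝ × ℝ => F q.1 q.2 - F 0 q.2
  exact hF.sub (hF.comp (continuous_const.prodMk continuous_snd))

lemma dF0_1 (τ : ℝ) : Continuous fun ξ => dF0 F ξ τ :=
  (dF0c hF).comp (continuous_id.prodMk continuous_const)

lemma dFt0c : Continuous (uncurry (dFt0 F)) := by
  rw [continuous_iff_continuousAt]
  rintro ⟨ξ₀, τ₀⟩
  rcases lt_trichotomy ξ₀ 0 with hlt | heq | hgt
  · have hmem : {q : ℝ × ℝ | q.1 < 0} ∈ 𝓝 (ξ₀, τ₀) :=
      (isOpen_lt continuous_fst continuous_const).mem_nhds hlt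
    have hev : (fun q : ℝ × ℝ => -dF0 F (-q.1) q.2) =ᶠ[𝓝 (ξ₀, τ₀)] uncurry (dFt0 F) := by
      filter_upwards [hmem] with q hq
      show -dF0 F (-q.1) q.2 = if 0 ≤ q.1 then dF0 F q.1 q.2 else -dF0 F (-q.1) q.2
      rw [if_neg (not_le.2 hq)]
    exact (((dF0c hF).comp ((continuous_fst.neg).prodMk
      continuous_snd)).neg.continuousAt).congr hev
  · subst heq
    have hval : uncurry (dFt0 F) ((0:ℝ), τ₀) = 0 := by
      show (if (0:ℝ) ≤ 0 then dF0 F 0 τ₀ else -dF0 F (-0) τ₀) = 0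
      rw [if_pos le_rfl]
      show F 0 τ₀ - F 0 τ₀ = 0
      ring
    unfold ContinuousAt
    rw [hval]
    have hbound : ∀ q : ℝ × ℝ, ‖uncurry (dFt0 F) q‖ ≤ |F |q.1| q.2 - F 0 q.2| := by
      intro q
      by_cases hq : 0 ≤ q.1
      · show ‖if 0 ≤ q.1 then dF0 F q.1 q.2 else -dF0 F (-q.1) q.2‖ ≤ _
        rw [if_pos hq, abs_of_nonneg hq]
        exact le_of_eq rfl
      · show ‖if 0 ≤ q.1 then dF0 F q.1 q.2 else -dF0 F (-q.1) q.2‖ ≤ _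
        rw [if_neg hq, abs_of_neg (not_le.1 hq), norm_neg]
        exact le_of_eq rfl
    have hcont : Continuous fun q : ℝ × ℝ => |F |q.1| q.2 - F 0 q.2| :=
      ((hF.comp ((continuous_fst.abs).prodMk continuous_snd)).sub
        (hF.comp (continuous_const.prodMk continuous_snd))).abs
    have htend : Tendsto (fun q : ℝ × ℝ => |F |q.1| q.2 - F 0 q.2|) (𝓝 ((0:ℝ), τ₀)) (𝓝 0) := by
      have h2 : Tendsto (fun q : ℝ × ℝ => |F |q.1| q.2 - F 0 q.2|) (𝓝 ((0:ℝ), τ₀))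
          (𝓝 (|F |(0:ℝ)| τ₀ - F 0 τ₀|)) := hcont.continuousAt
      simpa using h2
    exact squeeze_zero_norm hbound htend
  · have hmem : {q : ℝ × ℝ | 0 < q.1} ∈ 𝓝 (ξ₀, τ₀) :=
      (isOpen_lt continuous_const continuous_fst).mem_nhds hgt
    have hev : (fun q : ℝ × ℝ => dF0 F q.1 q.2) =ᶠ[𝓝 (ξ₀, τ₀)] uncurry (dFt0 F) := by
      filter_upwards [hmem] with q hq
      show dF0 F q.1 q.2 = if 0 ≤ q.1 then dF0 F q.1 q.2 else -dF0 F (-q.1) q.2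
      rw [if_pos hq.le]
    exact ((dF0c hF).continuousAt).congr hev

lemma dFt0_1 (τ : ℝ) : Continuous fun ξ => dFt0 F ξ τ :=
  (dFt0c hF).comp (continuous_id.prodMk continuous_const)

lemma dG0c : Continuous (uncurry (dG0 F)) := by
  have h1 : Continuous (uncurry fun (τ ξ : ℝ) => dFt0 F ξ τ) :=
    (dFt0c hF).comp (continuous_snd.prodMk continuous_fst)
  exact duh_cont_param (k := fun τ ξ => dFt0 F ξ τ) h1

lemma dG0d (w τ : ℝ) : HasDerivAt (fun v => dG0 F v τ) (dFt0 F w τ) w :=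
  duh_ftc (dFt0_1 hF τ) w

lemma dThc1 : ContDiff ℝ 1 (dTh F) := by
  refine duh_contDiff_primitive' (g := fun y τ => dG0 F (y - τ) τ)
    (h := fun y τ => dFt0 F (y - τ) τ) ?_ ?_ ?_ (fun p => rfl)
  · have hinner : Continuous (fun q : ℝ × ℝ => ((q.1 - q.2, q.2) : ℝ × ℝ)) :=
      (continuous_fst.sub continuous_snd).prodMk continuous_snd
    have h3 := (dG0c hF).comp hinner
    exact h3
  · have hinner : Continuous (fun q : ℝ × ℝ => ((q.1 - q.2, q.2) : ℝ × ℝ)) :=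
      (continuous_fst.sub continuous_snd).prodMk continuous_snd
    have h3 := (dFt0c hF).comp hinner
    exact h3
  · intro y τ
    have h2 := (dG0d hF (y - τ) τ).comp y ((hasDerivAt_id y).sub_const τ)
    simpa [Function.comp_def] using h2

lemma dTh'c1 : ContDiff ℝ 1 (dTh' F) := by
  refine duh_contDiff_primitive' (g := fun y τ => dG0 F (y + τ) τ)
    (h := fun y τ => dFt0 F (y + τ) τ) ?_ ?_ ?_ (fun p => rfl)
  · have hinner : Continuous (fun q : ℝ × ℝ => ((q.1 + q.2, q.2) : ℝ × ℝ)) :=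
      (continuous_fst.add continuous_snd).prodMk continuous_snd
    have h3 := (dG0c hF).comp hinner
    exact h3
  · have hinner : Continuous (fun q : ℝ × ℝ => ((q.1 + q.2, q.2) : ℝ × ℝ)) :=
      (continuous_fst.add continuous_snd).prodMk continuous_snd
    have h3 := (dFt0c hF).comp hinner
    exact h3
  · intro y τ
    have h2 := (dG0d hF (y + τ) τ).comp y ((hasDerivAt_id y).add_const τ)
    simpa [Function.comp_def] using h2

lemma dCcd (s : ℝ) : HasDerivAt (dCc F) (dc F s) s := duh_ftc (dcc hF) s

lemma dCccont : Continuous (dCc F) :=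
  (Differentiable.continuous fun s => (dCcd hF s).differentiableAt)

lemma dCc1 : ContDiff ℝ 1 (dCc F) := by
  rw [contDiff_one_iff_deriv]
  refine ⟨fun s => (dCcd hF s).differentiableAt, ?_⟩
  have h1 : deriv (dCc F) = dc F := funext fun s => (dCcd hF s).deriv
  rw [h1]; exact dcc hF

lemma dCmaxc : Continuous (dCmax F) :=
  (dCccont hF).comp (continuous_id.max continuous_const)

lemma dAbard (s : ℝ) : HasDerivAt (dAbar F) (dCmax F s) s := duh_ftc (dCmaxc hF) s

lemma dAbar1 : ContDiff ℝ 1 (dAbar F) := by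
  rw [contDiff_one_iff_deriv]
  refine ⟨fun s => (dAbard hF s).differentiableAt, ?_⟩
  have h1 : deriv (dAbar F) = dCmax F := funext fun s => (dAbard hF s).deriv
  rw [h1]; exact dCmaxc hF

lemma dC2d (s : ℝ) : HasDerivAt (dC2 F) (s * dc F s) s :=
  duh_ftc (continuous_id.mul (dcc hF)) s

lemma dC21 : ContDiff ℝ 1 (dC2 F) := by
  rw [contDiff_one_iff_deriv]
  refine ⟨fun s => (dC2d hF s).differentiableAt, ?_⟩
  have h1 : deriv (dC2 F) = fun s => s * dc F s := funext fun s => (dC2d hF s).deriv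
  rw [h1]; exact continuous_id.mul (dcc hF)

lemma dV1 : ContDiff ℝ 1 (dV F) := (contDiff_id.mul (dCc1 hF)).sub (dC21 hF)

lemma dVd (s : ℝ) : HasDerivAt (dV F) (dCc F s) s := by
  have h1 : HasDerivAt (fun z : ℝ => z * dCc F z) (1 * dCc F s + s * dc F s) s :=
    (hasDerivAt_id s).mul (dCcd hF s)
  have h2 := h1.sub (dC2d hF s)
  show HasDerivAt (fun z : ℝ => z * dCc F z - dC2 F z) (dCc F s) s
  refine h2.congr_deriv ?_
  ring

lemma dW (s : ℝ) : (∫ τ in (0:ℝ)..s, dc F τ * (s - τ)) = dV F s := by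
  have h1 : (∫ τ in (0:ℝ)..s, dc F τ * (s - τ)) = ∫ τ in (0:ℝ)..s, (s * dc F τ - τ * dc F τ) := by
    apply intervalIntegral.integral_congr
    intro τ _
    show dc F τ * (s - τ) = s * dc F τ - τ * dc F τ
    ring
  have hi1 : IntervalIntegrable (fun τ : ℝ => s * dc F τ) volume 0 s :=
    (continuous_const.mul (dcc hF)).intervalIntegrable _ _
  have hi2 : IntervalIntegrable (fun τ : ℝ => τ * dc F τ) volume 0 s :=
    ((continuous_id.mul (dcc hF) : Continuous fun τ : ℝ => τ * dc F τ)).intervalIntegrable _ _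
  rw [h1, intervalIntegral.integral_sub hi1 hi2, intervalIntegral.integral_const_mul]
  rfl

lemma dVA (s : ℝ) (hs : 0 ≤ s) : dV F s = dAbar F s := by
  have hVc : ContinuousOn (dV F) (Icc 0 s) :=
    (Differentiable.continuous fun z => (dVd hF z).differentiableAt).continuousOn
  have hAc : ContinuousOn (dAbar F) (Icc 0 s) :=
    (Differentiable.continuous fun z => (dAbard hF z).differentiableAt).continuousOn
  have h0 : dV F 0 = dAbar F 0 := by
    show (0:ℝ) * dCc F 0 - (∫ σ in (0:ℝ)..(0:ℝ), σ * dc F σ) = ∫ σ in (0:ℝ)..(0:ℝ), dCmax F σ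
    rw [intervalIntegral.integral_same, intervalIntegral.integral_same]
    ring
  have hmn := eq_of_has_deriv_right_eq (f' := fun σ => dCc F σ) (a := (0:ℝ)) (b := s)
    (fun σ _ => (dVd hF σ).hasDerivWithinAt)
    (fun σ hσ => by
      have h2 := (dAbard hF σ).hasDerivWithinAt (s := Ici σ)
      have h3 : dCmax F σ = dCc F σ := by
        show dCc F (max σ 0) = dCc F σ
        rw [max_eq_left hσ.1]
      rwa [h3] at h2)
    hVc hAc h0
  exact hmn s (right_mem_Icc.2 hs)

lemma dOddInt (τ a : ℝ) : (∫ ξ in (0:ℝ)..a, dFt0 F ξ τ) = ∫ ξ in (0:ℝ)..|a|, dF0 F ξ τ := by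
  rcases le_or_gt 0 a with ha | ha
  · rw [abs_of_nonneg ha]
    apply intervalIntegral.integral_congr
    intro ξ hξ
    rw [uIcc_of_le ha] at hξ
    show (if 0 ≤ ξ then dF0 F ξ τ else -dF0 F (-ξ) τ) = dF0 F ξ τ
    rw [if_pos hξ.1]
  · have h1 : (∫ ξ in (0:ℝ)..a, dFt0 F ξ τ) = ∫ ξ in (0:ℝ)..a, -dF0 F (-ξ) τ := by
      apply intervalIntegral.integral_congr
      intro ξ hξ
      rw [uIcc_of_ge ha.le] at hξ
      show (if 0 ≤ ξ then dF0 F ξ τ else -dF0 F (-ξ) τ) = -dF0 F (-ξ) τ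
      rcases lt_or_eq_of_le hξ.2 with h0 | h0
      · rw [if_neg (not_le.2 h0)]
      · subst h0
        rw [if_pos le_rfl]
        show F 0 τ - F 0 τ = -(F (-0) τ - F 0 τ)
        rw [neg_zero]
        ring
    rw [h1, intervalIntegral.integral_neg]
    have h2 : (∫ ξ in (0:ℝ)..a, dF0 F (-ξ) τ) = ∫ ξ in (-a)..(0:ℝ), dF0 F ξ τ := by
      have h3 := intervalIntegral.integral_comp_neg (a := (0:ℝ)) (b := a)
        (fun ξ => dF0 F ξ τ)
      simpa using h3
    rw [h2, abs_of_neg ha, intervalIntegral.integral_symm, neg_neg]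

lemma dPhi1 : ContDiff ℝ 1 (dPhi F) := by
  have h1 : ContDiff ℝ 1 (fun p : ℝ × ℝ => dTh F (p.2, p.1 + p.2)) := by
    have hinner : ContDiff ℝ 1 (fun p : ℝ × ℝ => ((p.2, p.1 + p.2) : ℝ × ℝ)) :=
      contDiff_snd.prodMk (contDiff_fst.add contDiff_snd)
    have h3 := (dThc1 hF).comp hinner
    exact h3
  have h2 : ContDiff ℝ 1 (fun p : ℝ × ℝ => dTh' F (p.2, p.1 - p.2)) := by
    have hinner : ContDiff ℝ 1 (fun p : ℝ × ℝ => ((p.2, p.1 - p.2) : ℝ × ℝ)) :=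
      contDiff_snd.prodMk (contDiff_fst.sub contDiff_snd)
    have h3 := (dTh'c1 hF).comp hinner
    exact h3
  have h3 : ContDiff ℝ 1 (fun p : ℝ × ℝ => dV F p.2) := by
    have h4 := (dV1 hF).comp (contDiff_snd (𝕜 := ℝ) (E := ℝ) (F := ℝ))
    exact h4
  have h4 : ContDiff ℝ 1 (fun p : ℝ × ℝ => dAbar F (p.2 - p.1)) := by
    have hinner : ContDiff ℝ 1 (fun p : ℝ × ℝ => p.2 - p.1) := contDiff_snd.sub contDiff_fst
    have h5 := (dAbar1 hF).comp hinner
    exact h5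
  have h5 := ((h1.sub h2).add ((contDiff_const (c := (2:ℝ))).mul h3)).sub ((contDiff_const (c := (2:ℝ))).mul h4)
  exact h5

end DuhamelLemmas

/-- If `F` is continuous with `F(0,0) = 0`, then the Duhamel integral
`u(x,t) = ∫₀ᵗ∫_{|x-t+τ|}^{x+t-τ} F(ξ,τ) dξ dτ` is of class `C¹` on
`[0,L]×[0,T]` (the derivatives extend continuously across the diagonal `x = t`). -/
theorem duhamel_integral_C1
    (L T : ℝ) (hL : 0 < L) (hT : 0 < T)
    (F : ℝ → ℝ → ℝ) (hF : Continuous (Function.uncurry F)) (hF00 : F 0 0 = 0)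
    (u : ℝ → ℝ → ℝ)
    (hu : ∀ x t, u x t = ∫ τ in (0:ℝ)..t, ∫ ξ in |x - t + τ|..(x + t - τ), F ξ τ) :
    ContDiffOn ℝ 1 (Function.uncurry u) (Icc 0 L ×ˢ Icc 0 T) := by
  apply ((dPhi1 hF).contDiffOn (s := Icc 0 L ×ˢ Icc 0 T)).congr
  rintro ⟨x, t⟩ hp
  have hx0 : (0:ℝ) ≤ x := hp.1.1
  have ht0 : (0:ℝ) ≤ t := hp.2.1
  show u x t = dPhi F (x, t)
  rw [hu x t]
  have inner_eq : ∀ τ ∈ uIcc (0:ℝ) t,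
      (∫ ξ in |x - t + τ|..(x + t - τ), F ξ τ)
      = (dG0 F (x + t - τ) τ - dG0 F (x - t + τ) τ)
        + (2 * (dc F τ * (t - τ)) - 2 * (dc F τ * max (t - x - τ) 0)) := by
    intro τ hτ
    rw [uIcc_of_le ht0] at hτ
    have hB0 : (0:ℝ) ≤ x + t - τ := by linarith [hτ.1, hτ.2]
    have hsplit : (∫ ξ in |x - t + τ|..(x + t - τ), F ξ τ)
        = (∫ ξ in |x - t + τ|..(x + t - τ), dF0 F ξ τ) + (x + t - τ - |x - t + τ|) * dc F τ := by
      have h1 : (∫ ξ in |x - t + τ|..(x + t - τ), F ξ τ)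
          = ∫ ξ in |x - t + τ|..(x + t - τ), (dF0 F ξ τ + dc F τ) := by
        apply intervalIntegral.integral_congr
        intro ξ _
        show F ξ τ = F ξ τ - F 0 τ + F 0 τ
        ring
      rw [h1, intervalIntegral.integral_add ((dF0_1 hF τ).intervalIntegrable _ _)
        intervalIntegrable_const, intervalIntegral.integral_const, smul_eq_mul]
    have hmain : (∫ ξ in |x - t + τ|..(x + t - τ), dF0 F ξ τ)
        = dG0 F (x + t - τ) τ - dG0 F (x - t + τ) τ := by
      rw [← intervalIntegral.integral_interval_sub_left
        ((dF0_1 hF τ).intervalIntegrable 0 (x + t - τ))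
        ((dF0_1 hF τ).intervalIntegrable 0 |x - t + τ|)]
      rw [← dOddInt hF τ (x - t + τ)]
      have h4 : (∫ ξ in (0:ℝ)..(x + t - τ), dF0 F ξ τ) = dG0 F (x + t - τ) τ := by
        show _ = ∫ ξ in (0:ℝ)..(x + t - τ), dFt0 F ξ τ
        rw [dOddInt hF τ (x + t - τ), abs_of_nonneg hB0]
      rw [h4]
      rfl
    have habs : x + t - τ - |x - t + τ| = 2 * (t - τ) - 2 * max (t - x - τ) 0 := by
      rcases le_total (x - t + τ) 0 with h | h
      · rw [abs_of_nonpos h, max_eq_left (by linarith : (0:ℝ) ≤ t - x - τ)]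
        ring
      · rw [abs_of_nonneg h, max_eq_right (by linarith : t - x - τ ≤ 0)]
        ring
    rw [hsplit, hmain, habs]
    ring
  rw [intervalIntegral.integral_congr (fun τ hτ => inner_eq τ hτ)]
  have hcG1 : Continuous fun τ => dG0 F (x + t - τ) τ := by
    have hinner : Continuous (fun τ : ℝ => ((x + t - τ, τ) : ℝ × ℝ)) :=
      (continuous_const.sub continuous_id).prodMk continuous_id
    have h3 := (dG0c hF).comp hinner
    exact h3
  have hcG2 : Continuous fun τ => dG0 F (x - t + τ) τ := by
    have hinner : Continuous (fun τ : ℝ => ((x - t + τ, τ) : ℝ × ℝ)) :=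
      (continuous_const.add continuous_id).prodMk continuous_id
    have h3 := (dG0c hF).comp hinner
    exact h3
  have int1 : IntervalIntegrable (fun τ => dG0 F (x + t - τ) τ) volume 0 t :=
    hcG1.intervalIntegrable _ _
  have int2 : IntervalIntegrable (fun τ => dG0 F (x - t + τ) τ) volume 0 t :=
    hcG2.intervalIntegrable _ _
  have int3 : IntervalIntegrable (fun τ => 2 * (dc F τ * (t - τ))) volume 0 t :=
    (continuous_const.mul ((dcc hF).mul (continuous_const.sub continuous_id))).intervalIntegrable _ _
  have int4 : IntervalIntegrable (fun τ => 2 * (dc F τ * max (t - x - τ) 0)) volume 0 t :=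
    (continuous_const.mul ((dcc hF).mul ((continuous_const.sub continuous_id).max
      continuous_const))).intervalIntegrable _ _
  rw [intervalIntegral.integral_add (int1.sub int2) (int3.sub int4),
    intervalIntegral.integral_sub int1 int2, intervalIntegral.integral_sub int3 int4,
    intervalIntegral.integral_const_mul, intervalIntegral.integral_const_mul]
  have hterm3 : (∫ τ in (0:ℝ)..t, dc F τ * (t - τ)) = dV F t := dW hF t
  have hterm4 : (∫ τ in (0:ℝ)..t, dc F τ * max (t - x - τ) 0) = dAbar F (t - x) := by
    rcases le_total t x with hle | hle
    · have h1 : (∫ τ in (0:ℝ)..t, dc F τ * max (t - x - τ) 0) = 0 := by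
        have heq : EqOn (fun τ => dc F τ * max (t - x - τ) 0) (fun _ => (0:ℝ)) (uIcc 0 t) := by
          intro τ hτ
          rw [uIcc_of_le ht0] at hτ
          show dc F τ * max (t - x - τ) 0 = 0
          rw [max_eq_right (by linarith [hτ.1] : t - x - τ ≤ 0), mul_zero]
        rw [intervalIntegral.integral_congr heq, intervalIntegral.integral_zero]
      have h2 : dAbar F (t - x) = 0 := by
        show (∫ σ in (0:ℝ)..(t - x), dCmax F σ) = 0
        have heq : EqOn (dCmax F) (fun _ => (0:ℝ)) (uIcc 0 (t - x)) := by
          intro σ hσ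
          rw [uIcc_of_ge (by linarith : t - x ≤ 0)] at hσ
          show dCc F (max σ 0) = 0
          rw [max_eq_right hσ.2]
          exact intervalIntegral.integral_same
        rw [intervalIntegral.integral_congr heq, intervalIntegral.integral_zero]
      rw [h1, h2]
    · have hs0 : (0:ℝ) ≤ t - x := by linarith
      have hint1 : IntervalIntegrable (fun τ => dc F τ * max (t - x - τ) 0) volume 0 (t - x) :=
        ((dcc hF).mul ((continuous_const.sub continuous_id).max
          continuous_const)).intervalIntegrable _ _
      have hint2 : IntervalIntegrable (fun τ => dc F τ * max (t - x - τ) 0) volume (t - x) t :=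
        ((dcc hF).mul ((continuous_const.sub continuous_id).max
          continuous_const)).intervalIntegrable _ _
      rw [← intervalIntegral.integral_add_adjacent_intervals hint1 hint2]
      have hzero : (∫ τ in (t - x)..t, dc F τ * max (t - x - τ) 0) = 0 := by
        have heq : EqOn (fun τ => dc F τ * max (t - x - τ) 0) (fun _ => (0:ℝ))
            (uIcc (t - x) t) := by
          intro τ hτ
          rw [uIcc_of_le (by linarith : t - x ≤ t)] at hτ
          show dc F τ * max (t - x - τ) 0 = 0
          rw [max_eq_right (by linarith [hτ.1] : t - x - τ ≤ 0), mul_zero]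
        rw [intervalIntegral.integral_congr heq, intervalIntegral.integral_zero]
      have hfirst : (∫ τ in (0:ℝ)..(t - x), dc F τ * max (t - x - τ) 0)
          = ∫ τ in (0:ℝ)..(t - x), dc F τ * ((t - x) - τ) := by
        apply intervalIntegral.integral_congr
        intro τ hτ
        rw [uIcc_of_le hs0] at hτ
        show dc F τ * max (t - x - τ) 0 = dc F τ * ((t - x) - τ)
        rw [max_eq_left (by linarith [hτ.2] : (0:ℝ) ≤ t - x - τ)]
      rw [hzero, hfirst, add_zero, dW hF (t - x), dVA hF (t - x) hs0]
  rw [hterm3, hterm4]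
  show _ = dTh F (t, x + t) - dTh' F (t, x - t) + 2 * dV F t - 2 * dAbar F (t - x)
  have hth1 : (∫ τ in (0:ℝ)..t, dG0 F (x + t - τ) τ) = dTh F (t, x + t) := rfl
  have hth2 : (∫ τ in (0:ℝ)..t, dG0 F (x - t + τ) τ) = dTh' F (t, x - t) := rfl
  rw [hth1, hth2]
  ring
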